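/- For the quasi-Kähler Lie group example, the nonzero components of the Weyl tensor W̃ of g̃ are determined by W̃₁₂₂₁ = −W̃₁₄₄₁ = −W̃₂₃₃₂ = W̃₃₄₄₃ = 3W̃₁₂₃₄ = 3W̃₁₄₃₂ = −(3/2)W̃₁₃₃₁ = −(3/2)W̃₂₄₄₂ = λ₁λ₃ + λ₂λ₄. -/

import Mathlib

noncomputable section

/-- The standard basis of `ℝ⁴` (denoted `X₁,…,X₄` in the paper). -/
def e (i : Fin 4) : Fin 4 → ℝ := Pi.single i 1

/-- The almost complex structure: `J X₁ = X₃, J X₂ = X₄, J X₃ = −X₁, J X₄ = −X₂`. -/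
def Jm (x : Fin 4 → ℝ) : Fin 4 → ℝ := ![-(x 2), -(x 3), x 0, x 1]

/-- The Norden metric `g = diag(1,1,−1,−1)`. -/
def gm (x y : Fin 4 → ℝ) : ℝ := x 0 * y 0 + x 1 * y 1 - x 2 * y 2 - x 3 * y 3

/-- The associated Norden metric `g̃(x,y) = g(x,Jy)`. -/
def gt (x y : Fin 4 → ℝ) : ℝ := gm x (Jm y)

/-- The bracket of the 4-parametric family of Lie algebras:
`[X₁,X₃]=λ₂X₂+λ₄X₄`, `[X₂,X₄]=λ₁X₁+λ₃X₃`, `[X₂,X₃]=−λ₂X₁−λ₃X₄`,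
`[X₃,X₄]=−λ₄X₁+λ₃X₂`, `[X₄,X₁]=λ₁X₂+λ₄X₃`, `[X₂,X₁]=−λ₂X₃+λ₁X₄`,
extended bilinearly and skew-symmetrically (here with 0-based indices). -/
def br (l1 l2 l3 l4 : ℝ) (x y : Fin 4 → ℝ) : Fin 4 → ℝ :=
  ![ -l2*(x 1*y 2 - x 2*y 1) + l1*(x 1*y 3 - x 3*y 1) - l4*(x 2*y 3 - x 3*y 2),
      l2*(x 0*y 2 - x 2*y 0) - l1*(x 0*y 3 - x 3*y 0) + l3*(x 2*y 3 - x 3*y 2),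
      l2*(x 0*y 1 - x 1*y 0) - l4*(x 0*y 3 - x 3*y 0) + l3*(x 1*y 3 - x 3*y 1),
     -l1*(x 0*y 1 - x 1*y 0) + l4*(x 0*y 2 - x 2*y 0) - l3*(x 1*y 2 - x 2*y 1) ]

/-- The Levi-Civita connection of `g`: `∇_x y = ½[x,y]`. -/
def nab (l1 l2 l3 l4 : ℝ) (x y : Fin 4 → ℝ) : Fin 4 → ℝ :=
  ((1 : ℝ)/2) • br l1 l2 l3 l4 x y

/-- The matrix of `g` in the standard basis. -/
def G : Matrix (Fin 4) (Fin 4) ℝ := fun i j => gm (e i) (e j)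

/-- The matrix of `g̃` in the standard basis. -/
def Gt : Matrix (Fin 4) (Fin 4) ℝ := fun i j => gt (e i) (e j)

/-- Auxiliary: the basis vectors as explicit tuples. -/
lemma he0 : e 0 = ![1,0,0,0] := by funext i; fin_cases i <;> simp [e]
lemma he1 : e 1 = ![0,1,0,0] := by funext i; fin_cases i <;> simp [e]
lemma he2 : e 2 = ![0,0,1,0] := by funext i; fin_cases i <;> simp [e]
lemma he3 : e 3 = ![0,0,0,1] := by funext i; fin_cases i <;> simp [e]

lemma gt_symm (x y : Fin 4 → ℝ) : gt x y = gt y x := by simp [gt, gm, Jm]; ring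

lemma gt_sub (x y z : Fin 4 → ℝ) : gt (x - y) z = gt x z - gt y z := by
  simp [gt, gm, Jm]; ring

/-- The Koszul expression. -/
def Kz (l1 l2 l3 l4 : ℝ) (x y z : Fin 4 → ℝ) : ℝ :=
  gt (br l1 l2 l3 l4 x y) z - gt (br l1 l2 l3 l4 y z) x + gt (br l1 l2 l3 l4 z x) y

/-- The Levi-Civita connection of `g̃`, written explicitly from the Koszul formula. -/
def ntK (l1 l2 l3 l4 : ℝ) (x y : Fin 4 → ℝ) : Fin 4 → ℝ :=
  ![ -(Kz l1 l2 l3 l4 x y (e 2))/2, -(Kz l1 l2 l3 l4 x y (e 3))/2,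
     -(Kz l1 l2 l3 l4 x y (e 0))/2, -(Kz l1 l2 l3 l4 x y (e 1))/2 ]

/-- The Ricci tensor of `g̃` in the standard basis. -/
def rhoT (l1 l2 l3 l4 : ℝ) : Fin 4 → Fin 4 → ℝ :=
![![l4^2 - l3^2/2 - l2^2 - 2*l1^2, -3/2*l3*l4 - l1*l2, l2*l4 + 3/2*l1*l3, 3/2*l2*l3 - l1*l4],
  ![-3/2*l3*l4 - l1*l2, -l4^2/2 + l3^2 - 2*l2^2 - l1^2, -l2*l3 + 3/2*l1*l4, 3/2*l2*l4 + l1*l3],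
  ![l2*l4 + 3/2*l1*l3, -l2*l3 + 3/2*l1*l4, -l4^2 - 2*l3^2 + l2^2 - l1^2/2, -l3*l4 - 3/2*l1*l2],
  ![3/2*l2*l3 - l1*l4, 3/2*l2*l4 + l1*l3, -l3*l4 - 3/2*l1*l2, -2*l4^2 - l3^2 - l2^2/2 + l1^2]]

set_option maxHeartbeats 2000000 in
/-- Closed form of the Koszul connection `ntK`. -/
lemma ntK_ex (l1 l2 l3 l4 : ℝ) (x y : Fin 4 → ℝ) : ntK l1 l2 l3 l4 x y =
    ![(-1)*l4*x 2*y 3 + (-1/2)*l4*x 1*y 0 + (-1/2)*l4*x 0*y 1 + (1)*l3*x 3*y 3 + (1)*l3*x 1*y 1 + (-1/2)*l2*x 3*y 0 + (1)*l2*x 2*y 1 + (-1/2)*l2*x 0*y 3 + (-1/2)*l1*x 3*y 1 + (1/2)*l1*x 1*y 3,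
     (1)*l4*x 2*y 2 + (1)*l4*x 0*y 0 + (-1)*l3*x 3*y 2 + (-1/2)*l3*x 1*y 0 + (-1/2)*l3*x 0*y 1 + (-1/2)*l2*x 2*y 0 + (1/2)*l2*x 0*y 2 + (1)*l1*x 3*y 0 + (-1/2)*l1*x 2*y 1 + (-1/2)*l1*x 1*y 2,
     (1/2)*l4*x 2*y 1 + (1/2)*l4*x 1*y 2 + (-1)*l4*x 0*y 3 + (-1/2)*l3*x 3*y 1 + (1/2)*l3*x 1*y 3 + (1/2)*l2*x 3*y 2 + (1/2)*l2*x 2*y 3 + (1)*l2*x 0*y 1 + (-1)*l1*x 3*y 3 + (-1)*l1*x 1*y 1,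
     (-1/2)*l4*x 2*y 0 + (1/2)*l4*x 0*y 2 + (1/2)*l3*x 3*y 0 + (-1)*l3*x 1*y 2 + (1/2)*l3*x 0*y 3 + (-1)*l2*x 2*y 2 + (-1)*l2*x 0*y 0 + (1/2)*l1*x 3*y 2 + (1/2)*l1*x 2*y 3 + (1)*l1*x 1*y 0] := by
  funext m
  fin_cases m <;> (norm_num [ntK, Kz, br, gt, gm, Jm, he0, he1, he2, he3, Matrix.cons_val_two, Matrix.cons_val_three] <;> ring)

set_option maxHeartbeats 4000000 in
set_option maxRecDepth 10000 in
/-- The Ricci tensor of `g̃` as an explicit bilinear form. -/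
lemma rho_form (l1 l2 l3 l4 : ℝ) (y z : Fin 4 → ℝ) :
    -(gt (ntK l1 l2 l3 l4 (e 0) (ntK l1 l2 l3 l4 y z) - ntK l1 l2 l3 l4 y (ntK l1 l2 l3 l4 (e 0) z)
          - ntK l1 l2 l3 l4 (br l1 l2 l3 l4 (e 0) y) z) (e 2)
      + gt (ntK l1 l2 l3 l4 (e 1) (ntK l1 l2 l3 l4 y z) - ntK l1 l2 l3 l4 y (ntK l1 l2 l3 l4 (e 1) z)
          - ntK l1 l2 l3 l4 (br l1 l2 l3 l4 (e 1) y) z) (e 3)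
      + gt (ntK l1 l2 l3 l4 (e 2) (ntK l1 l2 l3 l4 y z) - ntK l1 l2 l3 l4 y (ntK l1 l2 l3 l4 (e 2) z)
          - ntK l1 l2 l3 l4 (br l1 l2 l3 l4 (e 2) y) z) (e 0)
      + gt (ntK l1 l2 l3 l4 (e 3) (ntK l1 l2 l3 l4 y z) - ntK l1 l2 l3 l4 y (ntK l1 l2 l3 l4 (e 3) z)
          - ntK l1 l2 l3 l4 (br l1 l2 l3 l4 (e 3) y) z) (e 1))
    = ((1)*l4^2 + ((-1/2))*l3^2 + (-1)*l2^2 + (-2)*l1^2) * y 0 * z 0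
      + (((-3/2))*l3*l4 + (-1)*l1*l2) * y 0 * z 1
      + ((1)*l2*l4 + ((3/2))*l1*l3) * y 0 * z 2
      + (((3/2))*l2*l3 + (-1)*l1*l4) * y 0 * z 3
      + (((-3/2))*l3*l4 + (-1)*l1*l2) * y 1 * z 0
      + (((-1/2))*l4^2 + (1)*l3^2 + (-2)*l2^2 + (-1)*l1^2) * y 1 * z 1
      + ((-1)*l2*l3 + ((3/2))*l1*l4) * y 1 * z 2
      + (((3/2))*l2*l4 + (1)*l1*l3) * y 1 * z 3
      + ((1)*l2*l4 + ((3/2))*l1*l3) * y 2 * z 0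
      + ((-1)*l2*l3 + ((3/2))*l1*l4) * y 2 * z 1
      + ((-1)*l4^2 + (-2)*l3^2 + (1)*l2^2 + ((-1/2))*l1^2) * y 2 * z 2
      + ((-1)*l3*l4 + ((-3/2))*l1*l2) * y 2 * z 3
      + (((3/2))*l2*l3 + (-1)*l1*l4) * y 3 * z 0
      + (((3/2))*l2*l4 + (1)*l1*l3) * y 3 * z 1
      + ((-1)*l3*l4 + ((-3/2))*l1*l2) * y 3 * z 2
      + ((-2)*l4^2 + (-1)*l3^2 + ((-1/2))*l2^2 + (1)*l1^2) * y 3 * z 3 := by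
  simp only [ntK_ex]
  norm_num [br, gt, gm, Jm, he0, he1, he2, he3, Matrix.cons_val_two, Matrix.cons_val_three]
  ring

set_option maxHeartbeats 10000000 in
/-- The nonzero components of the Weyl tensor `W̃` of `g̃` are determined by
`W̃₁₂₂₁ = −W̃₁₄₄₁ = −W̃₂₃₃₂ = W̃₃₄₄₃ = 3W̃₁₂₃₄ = 3W̃₁₄₃₂ = −(3/2)W̃₁₃₃₁ = −(3/2)W̃₂₄₄₂
 = λ₁λ₃ + λ₂λ₄`. -/
theorem stmt_18 (l1 l2 l3 l4 : ℝ)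
    -- `nt` is the Levi-Civita connection `∇̃` of the (left-invariant) metric `g̃`:
    -- the unique bilinear, torsion-free, `g̃`-compatible connection on the Lie algebra
    (nt : (Fin 4 → ℝ) → (Fin 4 → ℝ) → (Fin 4 → ℝ))
    (hnt_addl : ∀ x y z, nt (x + y) z = nt x z + nt y z)
    (hnt_smull : ∀ (c : ℝ) x z, nt (c • x) z = c • nt x z)
    (hnt_addr : ∀ x y z, nt x (y + z) = nt x y + nt x z)
    (hnt_smulr : ∀ (c : ℝ) x y, nt x (c • y) = c • nt x y)
    (hnt_tor : ∀ x y, nt x y - nt y x = br l1 l2 l3 l4 x y)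
    (hnt_met : ∀ x y z, gt (nt x y) z + gt y (nt x z) = 0)
    -- the (0,4)-curvature tensor `R̃(x,y,z,u) = g̃(R̃(x,y)z, u)` of `∇̃`
    (Rt : (Fin 4 → ℝ) → (Fin 4 → ℝ) → (Fin 4 → ℝ) → (Fin 4 → ℝ) → ℝ)
    (hRt : ∀ x y z u, Rt x y z u
      = gt (nt x (nt y z) - nt y (nt x z) - nt (br l1 l2 l3 l4 x y) z) u)
    -- the Ricci tensor `ρ̃(y,z) = g̃ⁱʲ R̃(eᵢ,y,z,eⱼ)` and scalar curvature `τ̃ = g̃ⁱʲ ρ̃(eᵢ,eⱼ)`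
    (rho : (Fin 4 → ℝ) → (Fin 4 → ℝ) → ℝ)
    (hrho : ∀ y z, rho y z = ∑ i, ∑ j, Gt⁻¹ i j * Rt (e i) y z (e j))
    (tau : ℝ) (htau : tau = ∑ i, ∑ j, Gt⁻¹ i j * rho (e i) (e j))
    -- the Weyl tensor `W̃ = R̃ − (1/(2n−2))(ψ₁(ρ̃) − (τ̃/(2n−1))π₁)` in dimension `2n = 4`
    (W : (Fin 4 → ℝ) → (Fin 4 → ℝ) → (Fin 4 → ℝ) → (Fin 4 → ℝ) → ℝ)
    (hW : ∀ x y z u, W x y z u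
      = Rt x y z u
        - (1/2) * ((gt y z * rho x u - gt x z * rho y u
                      + rho y z * gt x u - rho x z * gt y u)
                    - (tau/3) * (gt y z * gt x u - gt x z * gt y u)))
    :
    W (e 0) (e 1) (e 1) (e 0) = l1*l3 + l2*l4 ∧
    -W (e 0) (e 3) (e 3) (e 0) = l1*l3 + l2*l4 ∧
    -W (e 1) (e 2) (e 2) (e 1) = l1*l3 + l2*l4 ∧
    W (e 2) (e 3) (e 3) (e 2) = l1*l3 + l2*l4 ∧
    3 * W (e 0) (e 1) (e 2) (e 3) = l1*l3 + l2*l4 ∧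
    3 * W (e 0) (e 3) (e 2) (e 1) = l1*l3 + l2*l4 ∧
    -(3/2) * W (e 0) (e 2) (e 2) (e 0) = l1*l3 + l2*l4 ∧
    -(3/2) * W (e 1) (e 3) (e 3) (e 1) = l1*l3 + l2*l4 := by
  -- Koszul formula for `nt`
  have koszul : ∀ x y z, 2 * gt (nt x y) z = Kz l1 l2 l3 l4 x y z := by
    intro x y z
    have h1 : ∀ a b c, gt (nt a b) c = - gt (nt a c) b := by
      intro a b c
      have h := hnt_met a b c
      rw [gt_symm b (nt a c)] at h
      linarith
    have h2 : ∀ a b c, gt (nt a b) c - gt (nt b a) c = gt (br l1 l2 l3 l4 a b) c := by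
      intro a b c
      rw [← gt_sub, hnt_tor]
    have e1 := h2 x y z
    have e2 := h1 y x z
    have e3 := h2 y z x
    have e4 := h1 z y x
    have e5 := h2 z x y
    have e6 := h1 x z y
    unfold Kz
    linarith
  -- `nt` equals the explicit connection `ntK`
  have nt_eq : ∀ x y, nt x y = ntK l1 l2 l3 l4 x y := by
    intro x y
    funext m
    fin_cases m
    · show nt x y 0 = -(Kz l1 l2 l3 l4 x y (e 2))/2
      have h := koszul x y (e 2)
      have h' : gt (nt x y) (e 2) = -(nt x y 0) := by simp [gt, gm, Jm, he2]
      linarith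
    · show nt x y 1 = -(Kz l1 l2 l3 l4 x y (e 3))/2
      have h := koszul x y (e 3)
      have h' : gt (nt x y) (e 3) = -(nt x y 1) := by simp [gt, gm, Jm, he3]
      linarith
    · show nt x y 2 = -(Kz l1 l2 l3 l4 x y (e 0))/2
      have h := koszul x y (e 0)
      have h' : gt (nt x y) (e 0) = -(nt x y 2) := by simp [gt, gm, Jm, he0]
      linarith
    · show nt x y 3 = -(Kz l1 l2 l3 l4 x y (e 1))/2
      have h := koszul x y (e 1)
      have h' : gt (nt x y) (e 1) = -(nt x y 3) := by simp [gt, gm, Jm, he1]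
      linarith
  have hR : ∀ x y z u, Rt x y z u
      = gt (ntK l1 l2 l3 l4 x (ntK l1 l2 l3 l4 y z) - ntK l1 l2 l3 l4 y (ntK l1 l2 l3 l4 x z)
            - ntK l1 l2 l3 l4 (br l1 l2 l3 l4 x y) z) u := by
    intro x y z u
    simp only [hRt, nt_eq]
  -- inverse of the metric matrix
  have hGtinv : Gt⁻¹ = Gt := by
    have h : Gt * Gt = 1 := by
      ext i j
      fin_cases i <;> fin_cases j <;>
        simp [Gt, gt, gm, Jm, e, Pi.single_apply, Matrix.mul_apply, Fin.sum_univ_four,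
          Matrix.one_apply]
    rw [Matrix.inv_eq_right_inv h]
  have r00 : rho (e 0) (e 0) = (1)*l4^2 + ((-1/2))*l3^2 + (-1)*l2^2 + (-2)*l1^2 := by
    rw [hrho]
    simp only [hGtinv, Fin.sum_univ_four]
    norm_num [Gt, gt, gm, Jm, he0, he1, he2, he3, Matrix.cons_val_two, Matrix.cons_val_three]
    simp only [hR]
    have hf := rho_form l1 l2 l3 l4 (e 0) (e 0)
    norm_num [he0, he1, he2, he3, Matrix.cons_val_two, Matrix.cons_val_three] at hf ⊢
    linarith [hf]
  have r01 : rho (e 0) (e 1) = ((-3/2))*l3*l4 + (-1)*l1*l2 := by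
    rw [hrho]
    simp only [hGtinv, Fin.sum_univ_four]
    norm_num [Gt, gt, gm, Jm, he0, he1, he2, he3, Matrix.cons_val_two, Matrix.cons_val_three]
    simp only [hR]
    have hf := rho_form l1 l2 l3 l4 (e 0) (e 1)
    norm_num [he0, he1, he2, he3, Matrix.cons_val_two, Matrix.cons_val_three] at hf ⊢
    linarith [hf]
  have r02 : rho (e 0) (e 2) = (1)*l2*l4 + ((3/2))*l1*l3 := by
    rw [hrho]
    simp only [hGtinv, Fin.sum_univ_four]
    norm_num [Gt, gt, gm, Jm, he0, he1, he2, he3, Matrix.cons_val_two, Matrix.cons_val_three]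
    simp only [hR]
    have hf := rho_form l1 l2 l3 l4 (e 0) (e 2)
    norm_num [he0, he1, he2, he3, Matrix.cons_val_two, Matrix.cons_val_three] at hf ⊢
    linarith [hf]
  have r03 : rho (e 0) (e 3) = ((3/2))*l2*l3 + (-1)*l1*l4 := by
    rw [hrho]
    simp only [hGtinv, Fin.sum_univ_four]
    norm_num [Gt, gt, gm, Jm, he0, he1, he2, he3, Matrix.cons_val_two, Matrix.cons_val_three]
    simp only [hR]
    have hf := rho_form l1 l2 l3 l4 (e 0) (e 3)
    norm_num [he0, he1, he2, he3, Matrix.cons_val_two, Matrix.cons_val_three] at hf ⊢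
    linarith [hf]
  have r10 : rho (e 1) (e 0) = ((-3/2))*l3*l4 + (-1)*l1*l2 := by
    rw [hrho]
    simp only [hGtinv, Fin.sum_univ_four]
    norm_num [Gt, gt, gm, Jm, he0, he1, he2, he3, Matrix.cons_val_two, Matrix.cons_val_three]
    simp only [hR]
    have hf := rho_form l1 l2 l3 l4 (e 1) (e 0)
    norm_num [he0, he1, he2, he3, Matrix.cons_val_two, Matrix.cons_val_three] at hf ⊢
    linarith [hf]
  have r11 : rho (e 1) (e 1) = ((-1/2))*l4^2 + (1)*l3^2 + (-2)*l2^2 + (-1)*l1^2 := by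
    rw [hrho]
    simp only [hGtinv, Fin.sum_univ_four]
    norm_num [Gt, gt, gm, Jm, he0, he1, he2, he3, Matrix.cons_val_two, Matrix.cons_val_three]
    simp only [hR]
    have hf := rho_form l1 l2 l3 l4 (e 1) (e 1)
    norm_num [he0, he1, he2, he3, Matrix.cons_val_two, Matrix.cons_val_three] at hf ⊢
    linarith [hf]
  have r12 : rho (e 1) (e 2) = (-1)*l2*l3 + ((3/2))*l1*l4 := by
    rw [hrho]
    simp only [hGtinv, Fin.sum_univ_four]
    norm_num [Gt, gt, gm, Jm, he0, he1, he2, he3, Matrix.cons_val_two, Matrix.cons_val_three]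
    simp only [hR]
    have hf := rho_form l1 l2 l3 l4 (e 1) (e 2)
    norm_num [he0, he1, he2, he3, Matrix.cons_val_two, Matrix.cons_val_three] at hf ⊢
    linarith [hf]
  have r13 : rho (e 1) (e 3) = ((3/2))*l2*l4 + (1)*l1*l3 := by
    rw [hrho]
    simp only [hGtinv, Fin.sum_univ_four]
    norm_num [Gt, gt, gm, Jm, he0, he1, he2, he3, Matrix.cons_val_two, Matrix.cons_val_three]
    simp only [hR]
    have hf := rho_form l1 l2 l3 l4 (e 1) (e 3)
    norm_num [he0, he1, he2, he3, Matrix.cons_val_two, Matrix.cons_val_three] at hf ⊢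
    linarith [hf]
  have r20 : rho (e 2) (e 0) = (1)*l2*l4 + ((3/2))*l1*l3 := by
    rw [hrho]
    simp only [hGtinv, Fin.sum_univ_four]
    norm_num [Gt, gt, gm, Jm, he0, he1, he2, he3, Matrix.cons_val_two, Matrix.cons_val_three]
    simp only [hR]
    have hf := rho_form l1 l2 l3 l4 (e 2) (e 0)
    norm_num [he0, he1, he2, he3, Matrix.cons_val_two, Matrix.cons_val_three] at hf ⊢
    linarith [hf]
  have r21 : rho (e 2) (e 1) = (-1)*l2*l3 + ((3/2))*l1*l4 := by
    rw [hrho]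
    simp only [hGtinv, Fin.sum_univ_four]
    norm_num [Gt, gt, gm, Jm, he0, he1, he2, he3, Matrix.cons_val_two, Matrix.cons_val_three]
    simp only [hR]
    have hf := rho_form l1 l2 l3 l4 (e 2) (e 1)
    norm_num [he0, he1, he2, he3, Matrix.cons_val_two, Matrix.cons_val_three] at hf ⊢
    linarith [hf]
  have r22 : rho (e 2) (e 2) = (-1)*l4^2 + (-2)*l3^2 + (1)*l2^2 + ((-1/2))*l1^2 := by
    rw [hrho]
    simp only [hGtinv, Fin.sum_univ_four]
    norm_num [Gt, gt, gm, Jm, he0, he1, he2, he3, Matrix.cons_val_two, Matrix.cons_val_three]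
    simp only [hR]
    have hf := rho_form l1 l2 l3 l4 (e 2) (e 2)
    norm_num [he0, he1, he2, he3, Matrix.cons_val_two, Matrix.cons_val_three] at hf ⊢
    linarith [hf]
  have r23 : rho (e 2) (e 3) = (-1)*l3*l4 + ((-3/2))*l1*l2 := by
    rw [hrho]
    simp only [hGtinv, Fin.sum_univ_four]
    norm_num [Gt, gt, gm, Jm, he0, he1, he2, he3, Matrix.cons_val_two, Matrix.cons_val_three]
    simp only [hR]
    have hf := rho_form l1 l2 l3 l4 (e 2) (e 3)
    norm_num [he0, he1, he2, he3, Matrix.cons_val_two, Matrix.cons_val_three] at hf ⊢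
    linarith [hf]
  have r30 : rho (e 3) (e 0) = ((3/2))*l2*l3 + (-1)*l1*l4 := by
    rw [hrho]
    simp only [hGtinv, Fin.sum_univ_four]
    norm_num [Gt, gt, gm, Jm, he0, he1, he2, he3, Matrix.cons_val_two, Matrix.cons_val_three]
    simp only [hR]
    have hf := rho_form l1 l2 l3 l4 (e 3) (e 0)
    norm_num [he0, he1, he2, he3, Matrix.cons_val_two, Matrix.cons_val_three] at hf ⊢
    linarith [hf]
  have r31 : rho (e 3) (e 1) = ((3/2))*l2*l4 + (1)*l1*l3 := by
    rw [hrho]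
    simp only [hGtinv, Fin.sum_univ_four]
    norm_num [Gt, gt, gm, Jm, he0, he1, he2, he3, Matrix.cons_val_two, Matrix.cons_val_three]
    simp only [hR]
    have hf := rho_form l1 l2 l3 l4 (e 3) (e 1)
    norm_num [he0, he1, he2, he3, Matrix.cons_val_two, Matrix.cons_val_three] at hf ⊢
    linarith [hf]
  have r32 : rho (e 3) (e 2) = (-1)*l3*l4 + ((-3/2))*l1*l2 := by
    rw [hrho]
    simp only [hGtinv, Fin.sum_univ_four]
    norm_num [Gt, gt, gm, Jm, he0, he1, he2, he3, Matrix.cons_val_two, Matrix.cons_val_three]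
    simp only [hR]
    have hf := rho_form l1 l2 l3 l4 (e 3) (e 2)
    norm_num [he0, he1, he2, he3, Matrix.cons_val_two, Matrix.cons_val_three] at hf ⊢
    linarith [hf]
  have r33 : rho (e 3) (e 3) = (-2)*l4^2 + (-1)*l3^2 + ((-1/2))*l2^2 + (1)*l1^2 := by
    rw [hrho]
    simp only [hGtinv, Fin.sum_univ_four]
    norm_num [Gt, gt, gm, Jm, he0, he1, he2, he3, Matrix.cons_val_two, Matrix.cons_val_three]
    simp only [hR]
    have hf := rho_form l1 l2 l3 l4 (e 3) (e 3)
    norm_num [he0, he1, he2, he3, Matrix.cons_val_two, Matrix.cons_val_three] at hf ⊢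
    linarith [hf]
  -- scalar curvature
  have htauV : tau = -5*(l1*l3 + l2*l4) := by
    rw [htau]
    simp only [hGtinv, Fin.sum_univ_four, r00, r01, r02, r03, r10, r11, r12, r13,
      r20, r21, r22, r23, r30, r31, r32, r33]
    norm_num [Gt, gt, gm, Jm, he0, he1, he2, he3, Matrix.cons_val_two, Matrix.cons_val_three]
    try ring
  refine ⟨?_, ?_, ?_, ?_, ?_, ?_, ?_, ?_⟩
  · rw [hW, hR, htauV, r00, r10, r11, r01]
    simp only [ntK_ex]
    norm_num [br, gt, gm, Jm, he0, he1, he2, he3, Matrix.cons_val_two, Matrix.cons_val_three]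
    try ring
  · rw [hW, hR, htauV, r00, r30, r33, r03]
    simp only [ntK_ex]
    norm_num [br, gt, gm, Jm, he0, he1, he2, he3, Matrix.cons_val_two, Matrix.cons_val_three]
    try ring
  · rw [hW, hR, htauV, r11, r21, r22, r12]
    simp only [ntK_ex]
    norm_num [br, gt, gm, Jm, he0, he1, he2, he3, Matrix.cons_val_two, Matrix.cons_val_three]
    try ring
  · rw [hW, hR, htauV, r22, r32, r33, r23]
    simp only [ntK_ex]
    norm_num [br, gt, gm, Jm, he0, he1, he2, he3, Matrix.cons_val_two, Matrix.cons_val_three]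
    try ring
  · rw [hW, hR, htauV, r03, r13, r12, r02]
    simp only [ntK_ex]
    norm_num [br, gt, gm, Jm, he0, he1, he2, he3, Matrix.cons_val_two, Matrix.cons_val_three]
    try ring
  · rw [hW, hR, htauV, r01, r31, r32, r02]
    simp only [ntK_ex]
    norm_num [br, gt, gm, Jm, he0, he1, he2, he3, Matrix.cons_val_two, Matrix.cons_val_three]
    try ring
  · rw [hW, hR, htauV, r00, r20, r22, r02]
    simp only [ntK_ex]
    norm_num [br, gt, gm, Jm, he0, he1, he2, he3, Matrix.cons_val_two, Matrix.cons_val_three]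
    try ring
  · rw [hW, hR, htauV, r11, r31, r33, r13]
    simp only [ntK_ex]
    norm_num [br, gt, gm, Jm, he0, he1, he2, he3, Matrix.cons_val_two, Matrix.cons_val_three]
    try ring

end
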